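/- Each Soft-Impute iterate is bounded: for the sequence Z^0 = 0, Z^{k+1} = S_λ(P_Ω(X) + P_Ω^⊥(Z^k)), the values f_λ(Z^k) are non-increasing, hence λ‖Z^k‖_* ≤ f_λ(Z^k) ≤ f_λ(0) = (1/2)‖P_Ω(X)‖_F², so for λ > 0 the sequence {Z^k} is bounded in nuclear norm by ‖P_Ω(X)‖_F²/(2λ). -/

import Mathlib

open Matrix BigOperators Finset

noncomputable section

/-- Squared Frobenius norm of a real matrix. -/
def frobSq {m n : ℕ} (A : Matrix (Fin m) (Fin n) ℝ) : ℝ :=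
  ∑ i, ∑ j, (A i j) ^ 2

/-- Frobenius norm. -/
def frobNorm {m n : ℕ} (A : Matrix (Fin m) (Fin n) ℝ) : ℝ :=
  Real.sqrt (frobSq A)

/-- The singular values of `A`, as square roots of the eigenvalues of `Aᴴ * A`. -/
def singVals {m n : ℕ} (A : Matrix (Fin m) (Fin n) ℝ) : Fin n → ℝ :=
  fun i => Real.sqrt (((show (Aᵀ * A).IsHermitian by
    simpa using Matrix.isHermitian_conjTranspose_mul_self A)).eigenvalues i)

/-- Nuclear norm: the sum of the singular values. -/
def nnorm {m n : ℕ} (A : Matrix (Fin m) (Fin n) ℝ) : ℝ :=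
  ∑ i, singVals A i

/-- Spectral norm: the largest singular value. -/
def specNorm {m n : ℕ} (A : Matrix (Fin m) (Fin n) ℝ) : ℝ :=
  ⨆ i, singVals A i

/-- Projection onto the observed entries `Ω`. -/
def pO {m n : ℕ} (Ω : Finset (Fin m × Fin n)) (Y : Matrix (Fin m) (Fin n) ℝ) :
    Matrix (Fin m) (Fin n) ℝ :=
  fun i j => if (i, j) ∈ Ω then Y i j else 0

/-- Complementary projection `P_Ω^⊥ = I - P_Ω`. -/
def pOc {m n : ℕ} (Ω : Finset (Fin m × Fin n)) (Y : Matrix (Fin m) (Fin n) ℝ) :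
    Matrix (Fin m) (Fin n) ℝ :=
  Y - pO Ω Y

/-- The objective `f_λ(Z) = ½‖P_Ω(Z) - P_Ω(X)‖_F² + λ‖Z‖_*`. -/
def fObj {m n : ℕ} (Ω : Finset (Fin m × Fin n)) (X : Matrix (Fin m) (Fin n) ℝ) (lam : ℝ)
    (Z : Matrix (Fin m) (Fin n) ℝ) : ℝ :=
  (1 / 2) * frobSq (pO Ω Z - pO Ω X) + lam * nnorm Z

/-- The surrogate `Q_λ(Z | Z̃) = ½‖P_Ω(X) + P_Ω^⊥(Z̃) - Z‖_F² + λ‖Z‖_*`. -/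
def qObj {m n : ℕ} (Ω : Finset (Fin m × Fin n)) (X : Matrix (Fin m) (Fin n) ℝ) (lam : ℝ)
    (Z Zt : Matrix (Fin m) (Fin n) ℝ) : ℝ :=
  (1 / 2) * frobSq (pO Ω X + pOc Ω Zt - Z) + lam * nnorm Z

/-- `IsSVD W U d V` : `W = U D Vᵀ` is a thin SVD of `W` with strictly positive
singular values `d` and orthonormal columns in `U` and `V`. -/
def IsSVD {m n r : ℕ} (W : Matrix (Fin m) (Fin n) ℝ) (U : Matrix (Fin m) (Fin r) ℝ)
    (d : Fin r → ℝ) (V : Matrix (Fin n) (Fin r) ℝ) : Prop :=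
  Uᵀ * U = 1 ∧ Vᵀ * V = 1 ∧ (∀ i, 0 < d i) ∧ W = U * Matrix.diagonal d * Vᵀ

/-- Trace inner product `⟨A, B⟩ = tr(AᵀB)`. -/
def minner {m n : ℕ} (A B : Matrix (Fin m) (Fin n) ℝ) : ℝ :=
  ∑ i, ∑ j, A i j * B i j

/-- `G` is a subgradient of the nuclear norm at `Z`. -/
def NucSubgrad {m n : ℕ} (Z G : Matrix (Fin m) (Fin n) ℝ) : Prop :=
  ∀ Y, nnorm Z + minner G (Y - Z) ≤ nnorm Y

end

section SoftImputeHelpers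

variable {a b r : ℕ}

private lemma frobSq_nonneg' (A : Matrix (Fin a) (Fin b) ℝ) : 0 ≤ frobSq A :=
  Finset.sum_nonneg fun _ _ => Finset.sum_nonneg fun _ _ => sq_nonneg _

private lemma dot_self_nonneg' (x : Fin a → ℝ) : 0 ≤ x ⬝ᵥ x :=
  Finset.sum_nonneg fun _ _ => mul_self_nonneg _

private lemma dot_shift (M : Matrix (Fin a) (Fin b) ℝ) (x : Fin b → ℝ) (y : Fin a → ℝ) :
    (M *ᵥ x) ⬝ᵥ y = x ⬝ᵥ (Mᵀ *ᵥ y) := by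
  simp only [Matrix.mulVec, dotProduct, Matrix.transpose_apply, Finset.sum_mul,
    Finset.mul_sum]
  rw [Finset.sum_comm]
  exact Finset.sum_congr rfl fun j _ => Finset.sum_congr rfl fun i _ => by ring

private lemma orth_dot {U : Matrix (Fin a) (Fin b) ℝ} (hU : Uᵀ * U = 1)
    (x y : Fin b → ℝ) : (U *ᵥ x) ⬝ᵥ (U *ᵥ y) = x ⬝ᵥ y := by
  rw [dot_shift, Matrix.mulVec_mulVec, hU, Matrix.one_mulVec]

private lemma minner_eq_trace (A B : Matrix (Fin a) (Fin b) ℝ) :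
    minner A B = Matrix.trace (Aᵀ * B) := by
  simp only [minner, Matrix.trace, Matrix.diag_apply, Matrix.mul_apply, Matrix.transpose_apply]
  rw [Finset.sum_comm]

private lemma diag_prod (B C : Matrix (Fin a) (Fin b) ℝ) (i : Fin b) :
    (Bᵀ * C) i i = ∑ k, B k i * C k i := by
  simp [Matrix.mul_apply]

private lemma col_mul {c : ℕ} (M : Matrix (Fin a) (Fin b) ℝ) (P : Matrix (Fin b) (Fin c) ℝ)
    (i : Fin c) (k : Fin a) : (M * P) k i = (M *ᵥ fun j => P j i) k := by
  simp [Matrix.mul_apply, Matrix.mulVec, dotProduct]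

private lemma herm_fact {n : ℕ} (A : Matrix (Fin n) (Fin n) ℝ) (hA : A.IsHermitian) :
    ∃ P : Matrix (Fin n) (Fin n) ℝ, Pᵀ * P = 1 ∧ P * Pᵀ = 1 ∧
      A * P = P * Matrix.diagonal hA.eigenvalues := by
  refine ⟨(hA.eigenvectorUnitary : Matrix (Fin n) (Fin n) ℝ), ?_, ?_, ?_⟩
  · have := (hA.eigenvectorUnitary).2
    rw [Matrix.mem_unitaryGroup_iff'] at this
    simpa [Matrix.star_eq_conjTranspose] using this
  · have := (hA.eigenvectorUnitary).2
    rw [Matrix.mem_unitaryGroup_iff] at this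
    simpa [Matrix.star_eq_conjTranspose] using this
  · have h := hA.conjStarAlgAut_star_eigenvectorUnitary
    simp only [Unitary.conjStarAlgAut_apply, star_star, Unitary.coe_star] at h
    have h2 : (hA.eigenvectorUnitary : Matrix (Fin n) (Fin n) ℝ) *
        ((star (hA.eigenvectorUnitary : Matrix (Fin n) (Fin n) ℝ)) * A *
          (hA.eigenvectorUnitary : Matrix (Fin n) (Fin n) ℝ)) =
        A * (hA.eigenvectorUnitary : Matrix (Fin n) (Fin n) ℝ) := by
      have hu := (hA.eigenvectorUnitary).2
      rw [Matrix.mem_unitaryGroup_iff] at hu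
      rw [← Matrix.mul_assoc, ← Matrix.mul_assoc, hu, Matrix.one_mul]
    rw [h] at h2
    rw [← h2]
    norm_num [Function.comp]

private lemma eig_fact (A : Matrix (Fin a) (Fin b) ℝ) :
    ∃ P : Matrix (Fin b) (Fin b) ℝ, Pᵀ * P = 1 ∧ P * Pᵀ = 1 ∧
      (Aᵀ * A) * P = P * Matrix.diagonal
        ((show (Aᵀ * A).IsHermitian by
    simpa using Matrix.isHermitian_conjTranspose_mul_self A).eigenvalues) := by
  have hconj : Aᴴ = Aᵀ := by ext i j; simp [Matrix.conjTranspose_apply]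
  obtain ⟨P, h1, h2, h3⟩ := herm_fact (Aᵀ * A) (show (Aᵀ * A).IsHermitian by
    simpa using Matrix.isHermitian_conjTranspose_mul_self A)
  exact ⟨P, h1, h2, h3⟩

private lemma minner_le_nnorm (G Y : Matrix (Fin a) (Fin b) ℝ)
    (hG : ∀ q : Fin b → ℝ, (G *ᵥ q) ⬝ᵥ (G *ᵥ q) ≤ q ⬝ᵥ q) :
    minner G Y ≤ nnorm Y := by
  obtain ⟨P, hPtP, hPPt, hspec⟩ := eig_fact Y
  set μ := (show (Yᵀ * Y).IsHermitian by
    simpa using Matrix.isHermitian_conjTranspose_mul_self Y).eigenvalues with hμ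
  have htr : minner G Y = ∑ i, ∑ k, (G * P) k i * (Y * P) k i := by
    have h1 : minner G Y = Matrix.trace ((G * P)ᵀ * (Y * P)) := by
      rw [minner_eq_trace, Matrix.transpose_mul,
        show Pᵀ * Gᵀ * (Y * P) = Pᵀ * (Gᵀ * Y * P) by simp [Matrix.mul_assoc],
        Matrix.trace_mul_comm Pᵀ (Gᵀ * Y * P),
        show Gᵀ * Y * P * Pᵀ = Gᵀ * Y * (P * Pᵀ) by simp [Matrix.mul_assoc],
        hPPt, Matrix.mul_one]
    rw [h1]
    simp only [Matrix.trace, Matrix.diag_apply]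
    exact Finset.sum_congr rfl fun i _ => diag_prod _ _ i
  rw [htr]
  unfold nnorm
  apply Finset.sum_le_sum
  intro i _
  set p : Fin b → ℝ := fun j => P j i with hp
  have hGcol : ∀ k, (G * P) k i = (G *ᵥ p) k := fun k => col_mul G P i k
  have hYcol : ∀ k, (Y * P) k i = (Y *ᵥ p) k := fun k => col_mul Y P i k
  have hppi : p ⬝ᵥ p = 1 := by
    have h2 : (Pᵀ * P) i i = 1 := by rw [hPtP]; simp
    rw [diag_prod] at h2
    simpa [dotProduct, hp] using h2
  have hu2 : ∑ k, (G *ᵥ p) k ^ 2 ≤ 1 := by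
    have := hG p
    rw [hppi] at this
    simpa [dotProduct, sq] using this
  have hv2 : ∑ k, (Y *ᵥ p) k ^ 2 = μ i := by
    have h3 : (Y * P)ᵀ * (Y * P) = Matrix.diagonal μ := by
      rw [Matrix.transpose_mul,
        show Pᵀ * Yᵀ * (Y * P) = Pᵀ * ((Yᵀ * Y) * P) by simp [Matrix.mul_assoc],
        hspec, ← Matrix.mul_assoc, hPtP, Matrix.one_mul]
    have h2 : ((Y * P)ᵀ * (Y * P)) i i = μ i := by rw [h3]; simp
    rw [diag_prod] at h2
    rw [← h2]
    exact Finset.sum_congr rfl fun k _ => by rw [hYcol k]; ring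
  calc ∑ k, (G * P) k i * (Y * P) k i
      = ∑ k, (G *ᵥ p) k * (Y *ᵥ p) k :=
        Finset.sum_congr rfl fun k _ => by rw [hGcol k, hYcol k]
    _ ≤ Real.sqrt (∑ k, (G *ᵥ p) k ^ 2) * Real.sqrt (∑ k, (Y *ᵥ p) k ^ 2) :=
        Real.sum_mul_le_sqrt_mul_sqrt _ _ _
    _ ≤ Real.sqrt 1 * Real.sqrt (μ i) := by
        rw [← hv2]
        exact mul_le_mul_of_nonneg_right (Real.sqrt_le_sqrt hu2) (Real.sqrt_nonneg _)
    _ = singVals Y i := by rw [Real.sqrt_one, one_mul]; rfl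

private lemma contract (U : Matrix (Fin a) (Fin r) ℝ) (V : Matrix (Fin b) (Fin r) ℝ)
    (c : Fin r → ℝ) (hU : Uᵀ * U = 1) (hV : Vᵀ * V = 1) (hc : ∀ j, c j ^ 2 ≤ 1)
    (q : Fin b → ℝ) :
    ((U * Matrix.diagonal c * Vᵀ) *ᵥ q) ⬝ᵥ ((U * Matrix.diagonal c * Vᵀ) *ᵥ q) ≤ q ⬝ᵥ q := by
  set w := Vᵀ *ᵥ q with hw
  have hM : (U * Matrix.diagonal c * Vᵀ) *ᵥ q = U *ᵥ (Matrix.diagonal c *ᵥ w) := by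
    rw [hw, Matrix.mulVec_mulVec, Matrix.mulVec_mulVec]
  rw [hM, orth_dot hU]
  have h1 : (Matrix.diagonal c *ᵥ w) ⬝ᵥ (Matrix.diagonal c *ᵥ w) = ∑ j, c j ^ 2 * w j ^ 2 := by
    simp only [Matrix.mulVec_diagonal, dotProduct]
    exact Finset.sum_congr rfl fun j _ => by ring
  have h2 : ∑ j, c j ^ 2 * w j ^ 2 ≤ ∑ j, w j ^ 2 :=
    Finset.sum_le_sum fun j _ => by nlinarith [sq_nonneg (w j), hc j]
  have h3 : ∑ j, w j ^ 2 = w ⬝ᵥ w := by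
    simp [dotProduct, sq]
  have h4 : w ⬝ᵥ w ≤ q ⬝ᵥ q := by
    have e1 : q ⬝ᵥ (V *ᵥ w) = w ⬝ᵥ w := by
      rw [dotProduct_comm, dot_shift, hw]
    have e2 : (V *ᵥ w) ⬝ᵥ (V *ᵥ w) = w ⬝ᵥ w := by
      rw [dot_shift, Matrix.mulVec_mulVec, hV, Matrix.one_mulVec]
    have expand : (q - V *ᵥ w) ⬝ᵥ (q - V *ᵥ w) = q ⬝ᵥ q - w ⬝ᵥ w := by
      have e3 : (V *ᵥ w) ⬝ᵥ q = w ⬝ᵥ w := by rw [dotProduct_comm]; exact e1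
      rw [sub_dotProduct, dotProduct_sub, dotProduct_sub, e1, e2, e3]
      ring
    have := dot_self_nonneg' (q - V *ᵥ w)
    linarith [expand]
  linarith [h1, h2, h3, h4]

private lemma sandwich (U : Matrix (Fin a) (Fin r) ℝ) (hU : Uᵀ * U = 1)
    (V : Matrix (Fin b) (Fin r) ℝ) (x y : Fin r → ℝ) :
    (U * Matrix.diagonal x * Vᵀ)ᵀ * (U * Matrix.diagonal y * Vᵀ) =
      V * Matrix.diagonal (fun j => x j * y j) * Vᵀ := by
  have hxy : Matrix.diagonal x * Matrix.diagonal y = Matrix.diagonal fun j => x j * y j :=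
    Matrix.diagonal_mul_diagonal x y
  calc (U * Matrix.diagonal x * Vᵀ)ᵀ * (U * Matrix.diagonal y * Vᵀ)
      = V * (Matrix.diagonal x * ((Uᵀ * U) * (Matrix.diagonal y * Vᵀ))) := by
        rw [Matrix.transpose_mul, Matrix.transpose_mul, Matrix.transpose_transpose,
          Matrix.diagonal_transpose]
        simp only [Matrix.mul_assoc]
    _ = V * Matrix.diagonal (fun j => x j * y j) * Vᵀ := by
        rw [hU, Matrix.one_mul, ← hxy]
        simp only [Matrix.mul_assoc]

private lemma trace_VDVt (V : Matrix (Fin b) (Fin r) ℝ) (hV : Vᵀ * V = 1)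
    (x : Fin r → ℝ) : Matrix.trace (V * Matrix.diagonal x * Vᵀ) = ∑ j, x j := by
  rw [Matrix.mul_assoc, Matrix.trace_mul_comm, Matrix.mul_assoc, hV, Matrix.mul_one,
    Matrix.trace_diagonal]

private lemma minner_UdV (U : Matrix (Fin a) (Fin r) ℝ) (V : Matrix (Fin b) (Fin r) ℝ)
    (x y : Fin r → ℝ) (hU : Uᵀ * U = 1) (hV : Vᵀ * V = 1) :
    minner (U * Matrix.diagonal x * Vᵀ) (U * Matrix.diagonal y * Vᵀ) = ∑ j, x j * y j := by
  rw [minner_eq_trace, sandwich U hU V x y, trace_VDVt V hV]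

private lemma nnorm_le_sum (U : Matrix (Fin a) (Fin r) ℝ) (V : Matrix (Fin b) (Fin r) ℝ)
    (e : Fin r → ℝ) (hU : Uᵀ * U = 1) (hV : Vᵀ * V = 1) (he : ∀ j, 0 ≤ e j) :
    nnorm (U * Matrix.diagonal e * Vᵀ) ≤ ∑ j, e j := by
  set A := U * Matrix.diagonal e * Vᵀ with hA
  obtain ⟨P, hPtP, hPPt, hspec⟩ := eig_fact A
  set μ := (show (Aᵀ * A).IsHermitian by
    simpa using Matrix.isHermitian_conjTranspose_mul_self A).eigenvalues with hμ
  have hAtA : Aᵀ * A = V * Matrix.diagonal (fun j => e j * e j) * Vᵀ := sandwich U hU V e e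
  set Q := Vᵀ * P with hQ
  have hcomm : Matrix.diagonal (fun j => e j * e j) * Q = Q * Matrix.diagonal μ := by
    have h1 : Vᵀ * ((Aᵀ * A) * P) = Vᵀ * (P * Matrix.diagonal μ) := by rw [hspec]
    rw [hAtA] at h1
    have h2 : Vᵀ * (V * Matrix.diagonal (fun j => e j * e j) * Vᵀ * P) =
        Matrix.diagonal (fun j => e j * e j) * Q := by
      rw [hQ]
      rw [show V * Matrix.diagonal (fun j => e j * e j) * Vᵀ * P =
        V * (Matrix.diagonal (fun j => e j * e j) * (Vᵀ * P)) by simp [Matrix.mul_assoc]]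
      rw [← Matrix.mul_assoc, hV, Matrix.one_mul]
    rw [h2] at h1
    rw [h1, hQ, Matrix.mul_assoc]
  have hentry : ∀ j i, (e j * e j) * Q j i = Q j i * μ i := by
    intro j i
    have h := congrFun (congrFun hcomm j) i
    rw [Matrix.diagonal_mul, Matrix.mul_diagonal] at h
    exact h
  have hrow : ∀ j, ∑ i, Q j i * Q j i = 1 := by
    intro j
    have h1 : Q * Qᵀ = 1 := by
      rw [hQ, Matrix.transpose_mul, Matrix.transpose_transpose,
        Matrix.mul_assoc, ← Matrix.mul_assoc P, hPPt, Matrix.one_mul, hV]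
    have h2 := congrFun (congrFun h1 j) j
    rw [Matrix.mul_apply] at h2
    simpa [Matrix.one_apply] using h2
  have hmu : ∀ i, μ i = ∑ j, (e j * e j) * (Q j i * Q j i) := by
    intro i
    have h1 : Pᵀ * ((Aᵀ * A) * P) = Matrix.diagonal μ := by
      rw [hspec, ← Matrix.mul_assoc, hPtP, Matrix.one_mul]
    have h2 : μ i = (Pᵀ * ((Aᵀ * A) * P)) i i := by rw [h1]; simp
    rw [hAtA] at h2
    rw [show Pᵀ * (V * Matrix.diagonal (fun j => e j * e j) * Vᵀ * P) =
      Qᵀ * (Matrix.diagonal (fun j => e j * e j) * Q) by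
        rw [hQ, Matrix.transpose_mul, Matrix.transpose_transpose]
        simp only [Matrix.mul_assoc]] at h2
    rw [diag_prod] at h2
    rw [h2]
    refine Finset.sum_congr rfl fun j _ => ?_
    rw [Matrix.diagonal_mul]
    ring
  have hkey : ∀ i, Real.sqrt (μ i) ≤ ∑ j, e j * (Q j i * Q j i) := by
    intro i
    have hsum_nonneg : 0 ≤ ∑ j, e j * (Q j i * Q j i) :=
      Finset.sum_nonneg fun j _ => mul_nonneg (he j) (mul_self_nonneg _)
    by_cases hz : μ i = 0
    · rw [hz, Real.sqrt_zero]; exact hsum_nonneg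
    · have hterm : ∀ j, e j * e j * (Q j i * Q j i) = μ i * (Q j i * Q j i) := by
        intro j
        have h := hentry j i
        calc e j * e j * (Q j i * Q j i) = e j * e j * Q j i * Q j i := by ring
          _ = Q j i * μ i * Q j i := by rw [h]
          _ = μ i * (Q j i * Q j i) := by ring
      have hs1 : μ i = μ i * ∑ j, Q j i * Q j i := by
        rw [Finset.mul_sum]
        calc μ i = ∑ j, e j * e j * (Q j i * Q j i) := hmu i
          _ = ∑ j, μ i * (Q j i * Q j i) := Finset.sum_congr rfl fun j _ => hterm j
      have hs2 : ∑ j, Q j i * Q j i = 1 := by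
        have h5 : μ i * 1 = μ i * ∑ j, Q j i * Q j i := by rw [mul_one]; exact hs1
        exact (mul_left_cancel₀ hz h5).symm
      have hsqrt : ∀ j, Real.sqrt (μ i) * (Q j i * Q j i) = e j * (Q j i * Q j i) := by
        intro j
        by_cases hq : Q j i = 0
        · rw [hq]; ring
        · have h6 : e j * e j = μ i := by
            have h7 : (e j * e j) * Q j i = (μ i) * Q j i := by
              rw [hentry j i]; ring
            exact mul_right_cancel₀ hq h7
          rw [← h6, show e j * e j = e j ^ 2 by ring, Real.sqrt_sq (he j)]
      refine le_of_eq ?_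
      calc Real.sqrt (μ i) = Real.sqrt (μ i) * ∑ j, Q j i * Q j i := by rw [hs2, mul_one]
        _ = ∑ j, Real.sqrt (μ i) * (Q j i * Q j i) := by rw [Finset.mul_sum]
        _ = ∑ j, e j * (Q j i * Q j i) := Finset.sum_congr rfl fun j _ => hsqrt j
  have hnn : nnorm A = ∑ i, Real.sqrt (μ i) := by
    simp [nnorm, singVals, hμ]
  rw [hnn]
  calc ∑ i, Real.sqrt (μ i) ≤ ∑ i, ∑ j, e j * (Q j i * Q j i) :=
        Finset.sum_le_sum fun i _ => hkey i
    _ = ∑ j, e j * ∑ i, Q j i * Q j i := by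
        rw [Finset.sum_comm]
        exact Finset.sum_congr rfl fun j _ => by rw [Finset.mul_sum]
    _ = ∑ j, e j := Finset.sum_congr rfl fun j _ => by rw [hrow j, mul_one]

private lemma nnorm_zero' : nnorm (0 : Matrix (Fin a) (Fin b) ℝ) = 0 := by
  unfold nnorm singVals
  have h : ∀ i, (show ((0 : Matrix (Fin a) (Fin b) ℝ)ᵀ * (0 : Matrix (Fin a) (Fin b) ℝ)).IsHermitian by
      simpa using Matrix.isHermitian_conjTranspose_mul_self (0 : Matrix (Fin a) (Fin b) ℝ)).eigenvalues i = 0 := by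
    intro i
    rw [Matrix.IsHermitian.eigenvalues_eq]
    simp
  refine Finset.sum_eq_zero fun i _ => ?_
  rw [h i, Real.sqrt_zero]

private lemma frobSq_expand (P Q : Matrix (Fin a) (Fin b) ℝ) :
    frobSq (P + Q) = frobSq P + 2 * minner P Q + frobSq Q := by
  unfold frobSq minner
  rw [Finset.mul_sum, ← Finset.sum_add_distrib, ← Finset.sum_add_distrib]
  refine Finset.sum_congr rfl fun i _ => ?_
  rw [Finset.mul_sum, ← Finset.sum_add_distrib, ← Finset.sum_add_distrib]
  refine Finset.sum_congr rfl fun j _ => ?_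
  simp only [Matrix.add_apply]
  ring

private lemma minner_sub_right (A B C : Matrix (Fin a) (Fin b) ℝ) :
    minner A (B - C) = minner A B - minner A C := by
  simp only [minner, Matrix.sub_apply, mul_sub, Finset.sum_sub_distrib]

private lemma minner_smul_left (t : ℝ) (A B : Matrix (Fin a) (Fin b) ℝ) :
    minner (t • A) B = t * minner A B := by
  simp only [minner, Matrix.smul_apply, smul_eq_mul, Finset.mul_sum]
  exact Finset.sum_congr rfl fun i _ => Finset.sum_congr rfl fun j _ => by ring

private lemma fObj_le_qObj (Ω : Finset (Fin a × Fin b)) (X : Matrix (Fin a) (Fin b) ℝ)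
    (lam : ℝ) (Zc Zt : Matrix (Fin a) (Fin b) ℝ) :
    fObj Ω X lam Zc ≤ qObj Ω X lam Zc Zt := by
  unfold fObj qObj
  have h : frobSq (pO Ω Zc - pO Ω X) ≤ frobSq (pO Ω X + pOc Ω Zt - Zc) := by
    unfold frobSq
    refine Finset.sum_le_sum fun i _ => Finset.sum_le_sum fun j _ => ?_
    by_cases hmem : (i, j) ∈ Ω
    · have h1 : (pO Ω Zc - pO Ω X) i j = Zc i j - X i j := by
        simp [pO, Matrix.sub_apply, hmem]
      have h2 : (pO Ω X + pOc Ω Zt - Zc) i j = X i j - Zc i j := by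
        simp [pO, pOc, Matrix.sub_apply, Matrix.add_apply, hmem]
      rw [h1, h2]
      exact le_of_eq (by ring)
    · have h1 : (pO Ω Zc - pO Ω X) i j = 0 := by
        simp [pO, Matrix.sub_apply, hmem]
      rw [h1]
      simpa using sq_nonneg ((pO Ω X + pOc Ω Zt - Zc) i j)
  linarith

private lemma qObj_self (Ω : Finset (Fin a × Fin b)) (X : Matrix (Fin a) (Fin b) ℝ)
    (lam : ℝ) (Zt : Matrix (Fin a) (Fin b) ℝ) :
    qObj Ω X lam Zt Zt = fObj Ω X lam Zt := by
  unfold fObj qObj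
  congr 1
  congr 1
  unfold frobSq
  refine Finset.sum_congr rfl fun i _ => Finset.sum_congr rfl fun j _ => ?_
  by_cases hmem : (i, j) ∈ Ω
  · have h1 : (pO Ω X + pOc Ω Zt - Zt) i j = X i j - Zt i j := by
      simp [pO, pOc, Matrix.sub_apply, Matrix.add_apply, hmem]
    have h2 : (pO Ω Zt - pO Ω X) i j = Zt i j - X i j := by
      simp [pO, Matrix.sub_apply, hmem]
    rw [h1, h2]; ring
  · have h1 : (pO Ω X + pOc Ω Zt - Zt) i j = 0 := by
      simp [pO, pOc, Matrix.sub_apply, Matrix.add_apply, hmem]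
    have h2 : (pO Ω Zt - pO Ω X) i j = 0 := by
      simp [pO, Matrix.sub_apply, hmem]
    rw [h1, h2]

end SoftImputeHelpers

theorem soft_impute_bounded {m n : ℕ} (Ω : Finset (Fin m × Fin n))
    (X : Matrix (Fin m) (Fin n) ℝ) (lam : ℝ) (hlam : 0 < lam)
    (Z : ℕ → Matrix (Fin m) (Fin n) ℝ) (h0 : Z 0 = 0)
    (hiter : ∀ k, ∃ (r : ℕ) (U : Matrix (Fin m) (Fin r) ℝ) (d : Fin r → ℝ)
        (V : Matrix (Fin n) (Fin r) ℝ),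
      IsSVD (pO Ω X + pOc Ω (Z k)) U d V ∧
      Z (k + 1) = U * Matrix.diagonal (fun i => max (d i - lam) 0) * Vᵀ) :
    (∀ k, fObj Ω X lam (Z (k + 1)) ≤ fObj Ω X lam (Z k)) ∧
    (∀ k, lam * nnorm (Z k) ≤ fObj Ω X lam (Z k)) ∧
    (∀ k, fObj Ω X lam (Z k) ≤ (1 / 2) * frobSq (pO Ω X)) ∧
    (∀ k, nnorm (Z k) ≤ frobSq (pO Ω X) / (2 * lam)) := by
  have hmono : ∀ k, fObj Ω X lam (Z (k + 1)) ≤ fObj Ω X lam (Z k) := by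
    intro k
    obtain ⟨r, U, d, V, ⟨hU, hV, hd, hW⟩, hZ1⟩ := hiter k
    set W : Matrix (Fin m) (Fin n) ℝ := pO Ω X + pOc Ω (Z k) with hWdef
    set e : Fin r → ℝ := fun j => max (d j - lam) 0 with hedef
    set c : Fin r → ℝ := fun j => min (d j) lam with hcdef
    have he0 : ∀ j, 0 ≤ e j := fun j => le_max_right _ _
    have hc_pos : ∀ j, 0 < c j := fun j => lt_min (hd j) hlam
    have hc_le : ∀ j, c j ≤ lam := fun j => min_le_right _ _
    have hce : ∀ j, c j * e j = lam * e j := by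
      intro j
      rcases le_total (d j) lam with h | h
      · have h1 : e j = 0 := by
          rw [hedef]; exact max_eq_right (by linarith)
        rw [h1, mul_zero, mul_zero]
      · have h1 : c j = lam := by rw [hcdef]; exact min_eq_right h
        rw [h1]
    have hsub : ∀ j, d j - e j = c j := by
      intro j
      rcases le_total (d j) lam with h | h
      · have h1 : e j = 0 := by rw [hedef]; exact max_eq_right (by linarith)
        have h2 : c j = d j := by rw [hcdef]; exact min_eq_left h
        rw [h1, h2, sub_zero]
      · have h1 : e j = d j - lam := by rw [hedef]; exact max_eq_left (by linarith)
        have h2 : c j = lam := by rw [hcdef]; exact min_eq_right h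
        rw [h1, h2]; ring
    have hWZ : W - Z (k + 1) = U * Matrix.diagonal c * Vᵀ := by
      have hde : Matrix.diagonal (fun i => d i - e i) = Matrix.diagonal c := by
        rw [show (fun i => d i - e i) = c from funext hsub]
      rw [hW, hZ1, ← Matrix.sub_mul, ← Matrix.mul_sub, Matrix.diagonal_sub, hde]
    have hminner_eq : minner (W - Z (k + 1)) (Z (k + 1)) = ∑ j, lam * e j := by
      rw [hWZ, hZ1, minner_UdV U V c e hU hV]
      exact Finset.sum_congr rfl fun j _ => hce j
    have hnnZ1 : nnorm (Z (k + 1)) ≤ ∑ j, e j := by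
      rw [hZ1]; exact nnorm_le_sum U V e hU hV he0
    have hdual : minner (W - Z (k + 1)) (Z k) ≤ lam * nnorm (Z k) := by
      rw [hWZ]
      have hfun : c = lam • (fun j => c j / lam) := by
        funext j
        rw [Pi.smul_apply, smul_eq_mul]
        field_simp
      have hdiag : Matrix.diagonal c = lam • Matrix.diagonal (fun j => c j / lam) := by
        rw [← Matrix.diagonal_smul, ← hfun]
      have hsc : U * Matrix.diagonal c * Vᵀ =
          lam • (U * Matrix.diagonal (fun j => c j / lam) * Vᵀ) := by
        rw [hdiag, Matrix.mul_smul, Matrix.smul_mul]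
      rw [hsc, minner_smul_left]
      have hcon : ∀ q : Fin n → ℝ,
          ((U * Matrix.diagonal (fun j => c j / lam) * Vᵀ) *ᵥ q) ⬝ᵥ
            ((U * Matrix.diagonal (fun j => c j / lam) * Vᵀ) *ᵥ q) ≤ q ⬝ᵥ q := by
        intro q
        refine contract U V _ hU hV (fun j => ?_) q
        have h1 := hc_pos j
        have h2 := hc_le j
        have h3 : c j / lam ≤ 1 := by rw [div_le_one hlam]; exact h2
        have h4 : 0 ≤ c j / lam := le_of_lt (div_pos h1 hlam)
        nlinarith
      exact mul_le_mul_of_nonneg_left (minner_le_nnorm _ _ hcon) (le_of_lt hlam)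
    have hq : qObj Ω X lam (Z (k + 1)) (Z k) ≤ qObj Ω X lam (Z k) (Z k) := by
      unfold qObj
      rw [show pO Ω X + pOc Ω (Z k) - Z (k + 1) = W - Z (k + 1) by rw [hWdef],
        show pO Ω X + pOc Ω (Z k) - Z k = W - Z k by rw [hWdef]]
      have hexp : frobSq (W - Z k) = frobSq (W - Z (k + 1)) +
          2 * minner (W - Z (k + 1)) (Z (k + 1) - Z k) + frobSq (Z (k + 1) - Z k) := by
        rw [show W - Z k = (W - Z (k + 1)) + (Z (k + 1) - Z k) by abel, frobSq_expand]
      have h8 : minner (W - Z (k + 1)) (Z (k + 1) - Z k) =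
          (∑ j, lam * e j) - minner (W - Z (k + 1)) (Z k) := by
        rw [minner_sub_right, hminner_eq]
      have h9 := frobSq_nonneg' (Z (k + 1) - Z k)
      have h10 : lam * nnorm (Z (k + 1)) ≤ lam * ∑ j, e j :=
        mul_le_mul_of_nonneg_left hnnZ1 hlam.le
      have h11 : (∑ j, lam * e j) = lam * ∑ j, e j := by rw [Finset.mul_sum]
      linarith [hdual]
    calc fObj Ω X lam (Z (k + 1)) ≤ qObj Ω X lam (Z (k + 1)) (Z k) :=
          fObj_le_qObj Ω X lam (Z (k + 1)) (Z k)
      _ ≤ qObj Ω X lam (Z k) (Z k) := hq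
      _ = fObj Ω X lam (Z k) := qObj_self Ω X lam (Z k)
  have h2 : ∀ k, lam * nnorm (Z k) ≤ fObj Ω X lam (Z k) := by
    intro k
    unfold fObj
    have := frobSq_nonneg' (pO Ω (Z k) - pO Ω X)
    linarith
  have hbase : fObj Ω X lam (Z 0) = (1 / 2) * frobSq (pO Ω X) := by
    rw [h0]
    unfold fObj
    rw [nnorm_zero', mul_zero, add_zero]
    congr 1
    unfold frobSq
    refine Finset.sum_congr rfl fun i _ => Finset.sum_congr rfl fun j _ => ?_
    by_cases hmem : (i, j) ∈ Ω
    · simp [pO, Matrix.sub_apply, hmem]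
    · simp [pO, Matrix.sub_apply, hmem]
  have h3 : ∀ k, fObj Ω X lam (Z k) ≤ (1 / 2) * frobSq (pO Ω X) := by
    intro k
    induction k with
    | zero => rw [hbase]
    | succ k ih => exact le_trans (hmono k) ih
  refine ⟨hmono, h2, h3, fun k => ?_⟩
  have h4 := le_trans (h2 k) (h3 k)
  rw [le_div_iff₀ (by positivity : (0:ℝ) < 2 * lam)]
  nlinarith [h4]
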